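/- Let G be a finite simple graph. A vertex v of G belongs to every MEG-set of G if and only if there exists a neighbor u of v such that every induced 2-path uvx (i.e., every vertex x adjacent to v with x ≠ u and x not adjacent to u) is part of a 4-cycle, meaning there exists a vertex w ≠ v adjacent to both u and x. -/

import Mathlib

open SimpleGraph

/-- A pair of vertices `u`, `v` monitors an edge `e` if `u` and `v` are reachable from
each other and `e` belongs to every shortest path (walk of length `G.dist u v`)
between `u` and `v`. -/
def Monitors {V : Type*} (G : SimpleGraph V) (u v : V) (e : Sym2 V) : Prop :=
  G.Reachable u v ∧ ∀ p : G.Walk u v, p.length = G.dist u v → e ∈ p.edges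

/-- A monitoring edge-geodetic set of `G`: every edge of `G` is monitored by some
pair of vertices of `M`. -/
def IsMEGSet {V : Type*} (G : SimpleGraph V) (M : Set V) : Prop :=
  ∀ e ∈ G.edgeSet, ∃ u ∈ M, ∃ v ∈ M, Monitors G u v e

/-- The monitoring edge-geodetic number of `G`: the minimum size of an MEG-set. -/
noncomputable def meg {V : Type*} [Fintype V] (G : SimpleGraph V) : ℕ :=
  sInf {n : ℕ | ∃ M : Finset V, IsMEGSet G ↑M ∧ M.card = n}

section MEGAux
variable {V : Type*} {G : SimpleGraph V}

private lemma monitors_symm {a b : V} {e : Sym2 V} (h : Monitors G a b e) :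
    Monitors G b a e := by
  refine ⟨h.1.symm, fun p hp => ?_⟩
  have := h.2 p.reverse (by rw [Walk.length_reverse, hp, dist_comm])
  simpa [Walk.edges_reverse] using this

private lemma split_of_mem_edges {u v a b : V} (p : G.Walk a b) (h : s(u,v) ∈ p.edges) :
    (∃ q : G.Walk a u, ∃ r : G.Walk v b, q.length + 1 + r.length = p.length) ∨
    (∃ q : G.Walk a v, ∃ r : G.Walk u b, q.length + 1 + r.length = p.length) := by
  induction p with
  | nil => simp at h
  | @cons a c b hadj p ih =>
    rw [Walk.edges_cons, List.mem_cons] at h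
    rcases h with h | h
    · rw [Sym2.eq_iff] at h
      rcases h with ⟨hu, hv⟩ | ⟨hu, hv⟩
      · subst hu; subst hv
        exact Or.inl ⟨Walk.nil, p, by simp only [Walk.length_nil, Walk.length_cons]; omega⟩
      · subst hu; subst hv
        exact Or.inr ⟨Walk.nil, p, by simp only [Walk.length_nil, Walk.length_cons]; omega⟩
    · rcases ih h with ⟨q, r, hl⟩ | ⟨q, r, hl⟩
      · exact Or.inl ⟨Walk.cons hadj q, r, by simp only [Walk.length_cons]; omega⟩
      · exact Or.inr ⟨Walk.cons hadj q, r, by simp only [Walk.length_cons]; omega⟩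

private lemma dist_split {u v a b : V} (huv : G.Adj u v) (q : G.Walk a u) (r : G.Walk v b)
    (h : q.length + 1 + r.length = G.dist a b) :
    G.dist a b = G.dist a u + 1 + G.dist v b := by
  obtain ⟨q', hq'⟩ := q.reachable.exists_walk_length_eq_dist
  obtain ⟨r', hr'⟩ := r.reachable.exists_walk_length_eq_dist
  have h1 := dist_le (q'.append (Walk.cons huv r'))
  rw [Walk.length_append, Walk.length_cons] at h1
  have h2 := dist_le q
  have h3 := dist_le r
  omega

private lemma meg_key {u v a b : V} (huv : G.Adj u v)
    (H : ∀ x, G.Adj v x → x ≠ u → ¬ G.Adj u x → ∃ w, w ≠ v ∧ G.Adj u w ∧ G.Adj x w)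
    (hmon : Monitors G a b s(u,v)) (hra : G.Reachable a u) (hrv : G.Reachable v b)
    (hb : b ≠ v)
    (hd : G.dist a b = G.dist a u + 1 + G.dist v b) : False := by
  classical
  obtain ⟨qa, hqa⟩ := hra.exists_walk_length_eq_dist
  have hk : 0 < G.dist v b := hrv.pos_dist_of_ne (Ne.symm hb)
  obtain ⟨qb, hqb⟩ := hrv.exists_walk_length_eq_dist
  cases qb with
  | nil => simp at hk
  | @cons _ x _ hvx q' =>
    rw [Walk.length_cons] at hqb
    have hxu : x ≠ u := by
      rintro rfl
      have := dist_le (qa.append q')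
      rw [Walk.length_append] at this
      omega
    have hux : ¬ G.Adj u x := by
      intro h
      have := dist_le (qa.append (Walk.cons h q'))
      rw [Walk.length_append, Walk.length_cons] at this
      omega
    obtain ⟨w, hwv, huw, hxw⟩ := H x hvx hxu hux
    set P := qa.append (Walk.cons huw (Walk.cons hxw.symm q')) with hPdef
    have hP : P.length = G.dist a b := by
      rw [hPdef, Walk.length_append, Walk.length_cons, Walk.length_cons]
      omega
    have hmem := hmon.2 P hP
    rw [hPdef] at hmem
    simp only [Walk.edges_append, Walk.edges_cons, List.mem_append, List.mem_cons] at hmem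
    rcases hmem with h | h | h | h
    · have hvs : v ∈ qa.support := qa.snd_mem_support_of_mem_edges h
      have h1 := dist_le ((qa.takeUntil v hvs).append (Walk.cons hvx q'))
      rw [Walk.length_append, Walk.length_cons] at h1
      have h2 := qa.length_takeUntil_le hvs
      omega
    · rw [Sym2.eq_iff] at h
      rcases h with ⟨_, hv⟩ | ⟨_, hv⟩
      · exact hwv hv.symm
      · exact huv.ne hv.symm
    · rw [Sym2.eq_iff] at h
      rcases h with ⟨_, hv⟩ | ⟨hu, _⟩
      · exact hvx.ne' hv.symm
      · exact hxu hu.symm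
    · have hvs : v ∈ q'.support := q'.snd_mem_support_of_mem_edges h
      have h1 := dist_le (q'.dropUntil v hvs)
      have h2 := q'.length_dropUntil_le hvs
      omega

private lemma monitors_self {a b : V} (hab : G.Adj a b) : Monitors G a b s(a,b) := by
  refine ⟨⟨hab.toWalk⟩, fun p hp => ?_⟩
  rw [dist_eq_one_iff_adj.mpr hab] at hp
  cases p with
  | nil => simp at hp
  | @cons _ c _ h q =>
    rw [Walk.length_cons] at hp
    obtain rfl : c = b := Walk.eq_of_length_eq_zero (p := q) (by omega)
    exact List.mem_cons_self

private lemma monitors_two {u v x : V} (huv : G.Adj u v) (hvx : G.Adj v x) (hxu : x ≠ u)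
    (hux : ¬ G.Adj u x) (hw : ∀ w, G.Adj u w → G.Adj w x → w = v) :
    Monitors G u x s(u,v) := by
  have hreach : G.Reachable u x := ⟨Walk.cons huv (Walk.cons hvx Walk.nil)⟩
  have hdist : G.dist u x = 2 := by
    have hle := dist_le (Walk.cons huv (Walk.cons hvx Walk.nil))
    simp only [Walk.length_cons, Walk.length_nil] at hle
    have h0 : G.dist u x ≠ 0 := by
      rw [Ne, dist_eq_zero_iff_eq_or_not_reachable]
      rintro (rfl | h)
      · exact hxu rfl
      · exact h hreach
    have h1 : G.dist u x ≠ 1 := fun h => hux (dist_eq_one_iff_adj.mp h)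
    omega
  refine ⟨hreach, fun p hp => ?_⟩
  rw [hdist] at hp
  cases p with
  | nil => simp at hp
  | @cons _ c _ h q =>
    cases q with
    | nil => simp at hp
    | @cons _ d _ h2 q2 =>
      simp only [Walk.length_cons] at hp
      obtain rfl : d = x := Walk.eq_of_length_eq_zero (p := q2) (by omega)
      obtain rfl : c = v := hw c h h2
      exact List.mem_cons_self

end MEGAux

/-- a vertex `v` belongs to every MEG-set of `G` iff it has a neighbor `u`
such that every induced 2-path `u-v-x` is part of a 4-cycle. -/
theorem mem_every_megSet_iff {V : Type*} [Fintype V] (G : SimpleGraph V) (v : V) :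
    (∀ M : Set V, IsMEGSet G M → v ∈ M) ↔
      ∃ u : V, G.Adj u v ∧
        ∀ x : V, G.Adj v x → x ≠ u → ¬ G.Adj u x →
          ∃ w : V, w ≠ v ∧ G.Adj u w ∧ G.Adj x w := by
  constructor
  · intro H
    by_contra hne
    push_neg at hne
    -- {v}ᶜ is an MEG-set
    have hM : IsMEGSet G ({v}ᶜ : Set V) := by
      intro e he
      induction e using Sym2.ind with
      | _ a b =>
        have hab : G.Adj a b := G.mem_edgeSet.mp he
        by_cases hva : a = v
        · subst hva
          obtain ⟨x, hvx, hxb, hbx, hWcond⟩ := hne b hab.symm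
          refine ⟨b, ?_, x, ?_, ?_⟩
          · simpa using hab.ne'
          · simpa using hvx.ne'
          · have := monitors_two (G := G) hab.symm hvx hxb hbx ?_
            · rwa [Sym2.eq_swap] at this
            · intro w h1 h2
              by_contra hwv
              exact (hWcond w hwv h1) h2.symm
        · by_cases hvb : b = v
          · subst hvb
            obtain ⟨x, hvx, hxa, hax, hWcond⟩ := hne a hab
            refine ⟨a, by simpa using hab.ne, x, by simpa using hvx.ne', ?_⟩
            refine monitors_two (G := G) hab hvx hxa hax ?_
            intro w h1 h2
            by_contra hwv
            exact (hWcond w hwv h1) h2.symm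
          · exact ⟨a, by simpa using hva, b, by simpa using hvb, monitors_self hab⟩
    have := H _ hM
    simp at this
  · rintro ⟨u, huv, H⟩ M hM
    obtain ⟨a, haM, b, hbM, hmon⟩ := hM _ (G.mem_edgeSet.mpr huv)
    by_cases hva : a = v
    · exact hva ▸ haM
    by_cases hvb : b = v
    · exact hvb ▸ hbM
    exfalso
    obtain ⟨p, hp⟩ := hmon.1.exists_walk_length_eq_dist
    have hmem := hmon.2 p hp
    rcases split_of_mem_edges p hmem with ⟨q, r, hl⟩ | ⟨q, r, hl⟩
    · exact meg_key huv H hmon ⟨q⟩ ⟨r⟩ hvb (dist_split huv q r (by omega))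
    · refine meg_key huv H (monitors_symm hmon) ⟨r.reverse⟩ ⟨q.reverse⟩ hva
        (dist_split huv r.reverse q.reverse ?_)
      rw [Walk.length_reverse, Walk.length_reverse, dist_comm]
      omega
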